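/- Let π: L̂ → L be a central extension of Lie superalgebras over a field of characteristic zero, and let h ⊆ L be an abelian subalgebra with L = ⊕_{α ∈ Δ∪{0}} L_α as a weight decomposition with respect to h (Δ a finite subset of h*\{0}), with L_0 = Σ_{α∈Δ}[L_α, L_{-α}]. Fix h ∈ h and h' ∈ π⁻¹(h). If m(t) is the minimal polynomial of ad h on L, then the minimal polynomial of ad h' on L̂ divides t·m(t). -/

import Mathlib

universe u v

/-- A Lie superalgebra over a field `F`: a `Z₂`-graded vector space with a bilinear
bracket that respects the grading and satisfies super-skew-symmetry and the
super Jacobi identity on homogeneous elements. -/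
class LieSuperAlgebra (F : Type u) (L : Type v) [Field F] [AddCommGroup L] [Module F L] where
  grading : ZMod 2 → Submodule F L
  bracket : L →ₗ[F] L →ₗ[F] L
  grading_sup : grading 0 ⊔ grading 1 = ⊤
  grading_inf : grading 0 ⊓ grading 1 = ⊥
  bracket_mem : ∀ i j : ZMod 2, ∀ x ∈ grading i, ∀ y ∈ grading j, bracket x y ∈ grading (i + j)
  super_skew : ∀ i j : ZMod 2, ∀ x ∈ grading i, ∀ y ∈ grading j,
    bracket x y = -(((-1 : F) ^ (i * j).val) • bracket y x)
  super_jacobi : ∀ i j : ZMod 2, ∀ x ∈ grading i, ∀ y ∈ grading j, ∀ z : L,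
    bracket x (bracket y z) =
      bracket (bracket x y) z + ((-1 : F) ^ (i * j).val) • bracket y (bracket x z)

namespace LieSuperAlgebra

variable (F : Type u) {L L' : Type v} [Field F] [AddCommGroup L] [Module F L]
  [LieSuperAlgebra F L] [AddCommGroup L'] [Module F L'] [LieSuperAlgebra F L']

/-- The bracket, as a binary operation. -/
def br (x y : L) : L := bracket (F := F) x y

/-- The center of a Lie superalgebra. -/
def center : Submodule F L where
  carrier := {z | ∀ x : L, br F z x = 0}
  add_mem' := by
    intro a b ha hb x
    simp only [br, map_add, LinearMap.add_apply] at *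
    rw [ha x, hb x, add_zero]
  zero_mem' := by intro x; simp [br]
  smul_mem' := by
    intro c a ha x
    simp only [br, map_smul, LinearMap.smul_apply] at *
    rw [ha x, smul_zero]

/-- A Lie superalgebra is perfect if it is spanned by brackets. -/
def IsPerfect : Prop :=
  Submodule.span F {z : L | ∃ x y : L, z = br F x y} = ⊤

/-- A homomorphism of Lie superalgebras: a linear map preserving brackets and the grading. -/
def IsHom (f : L →ₗ[F] L') : Prop :=
  (∀ x y : L, f (br F x y) = br F (f x) (f y)) ∧
    ∀ i : ZMod 2, (grading (F := F) (L := L) i).map f ≤ grading (F := F) (L := L') i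

/-- A central extension: a surjective homomorphism whose kernel is central. -/
def IsCentralExtension (π : L →ₗ[F] L') : Prop :=
  IsHom F π ∧ Function.Surjective π ∧ ∀ x : L, π x = 0 → x ∈ center F (L := L)

end LieSuperAlgebra

namespace LieSuperAlgebra

/-- The weight space of `L` of weight `α` relative to an abelian subalgebra `h`. -/
def weightSpace (F : Type u) {L : Type v} [Field F] [AddCommGroup L] [Module F L]
    [LieSuperAlgebra F L] (h : Submodule F L) (α : Module.Dual F h) : Submodule F L where
  carrier := {x | ∀ y : h, br F (y : L) x = α y • x}
  add_mem' := by
    intro a b ha hb y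
    simp only [br, map_add] at *
    rw [ha y, hb y, smul_add]
  zero_mem' := by intro y; simp [br]
  smul_mem' := by
    intro c a ha y
    simp only [br, map_smul] at *
    rw [ha y, smul_comm]

end LieSuperAlgebra


open LieSuperAlgebra in
private lemma grading_disj {F : Type u} {L : Type v} [Field F] [AddCommGroup L]
    [Module F L] [LieSuperAlgebra F L] (i : ZMod 2) {a b : L}
    (ha : a ∈ grading (F := F) (L := L) i) (hb : b ∈ grading (F := F) (L := L) (1 + i))
    (hab : a + b = 0) : a = 0 := by
  have hba : a = -b := add_eq_zero_iff_eq_neg.mp hab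
  have hnb : -b ∈ grading (F := F) (L := L) (1 + i) := neg_mem hb
  have hcases : ∀ j : ZMod 2, j = 0 ∨ j = 1 := by decide
  have hmem : a ∈ grading (F := F) (L := L) 0 ⊓ grading (F := F) (L := L) 1 := by
    rcases hcases i with hi | hi <;> subst hi
    · exact ⟨ha, by rw [hba]; simpa using hnb⟩
    · constructor
      · rw [hba]
        have h11 : (1 : ZMod 2) + 1 = 0 := by decide
        rw [h11] at hnb
        exact hnb
      · exact ha
  rw [grading_inf] at hmem
  simpa using hmem

open LieSuperAlgebra in
private lemma center_comp_br {F : Type u} {L : Type v} [Field F] [AddCommGroup L]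
    [Module F L] [LieSuperAlgebra F L] {z z₀ z₁ : L} (hz : z ∈ center F)
    (hz₀ : z₀ ∈ grading (F := F) (L := L) 0) (hz₁ : z₁ ∈ grading (F := F) (L := L) 1)
    (hzeq : z₀ + z₁ = z) (y : L) : br F z₀ y = 0 ∧ br F z₁ y = 0 := by
  have hytop : y ∈ grading (F := F) (L := L) 0 ⊔ grading (F := F) (L := L) 1 := by
    rw [grading_sup]; trivial
  obtain ⟨y₀, hy₀, y₁, hy₁, hyeq⟩ := Submodule.mem_sup.mp hytop
  have key : ∀ j : ZMod 2, ∀ w ∈ grading (F := F) (L := L) j,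
      br F z₀ w = 0 ∧ br F z₁ w = 0 := by
    intro j w hw
    have hsum : br F z₀ w + br F z₁ w = 0 := by
      have : br F z w = 0 := hz w
      rw [← hzeq] at this
      simpa [br, map_add] using this
    have h0m : br F z₀ w ∈ grading (F := F) (L := L) j := by
      simpa [br] using bracket_mem 0 j z₀ hz₀ w hw
    have h1m : br F z₁ w ∈ grading (F := F) (L := L) (1 + j) :=
      bracket_mem 1 j z₁ hz₁ w hw
    have ha : br F z₀ w = 0 := grading_disj j h0m h1m hsum
    refine ⟨ha, ?_⟩
    rw [ha, zero_add] at hsum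
    exact hsum
  have h0 := key 0 y₀ hy₀
  have h1 := key 1 y₁ hy₁
  constructor
  · have : br F z₀ (y₀ + y₁) = 0 := by
      simp only [br, map_add] at *
      rw [h0.1, h1.1, add_zero]
    rwa [hyeq] at this
  · have : br F z₁ (y₀ + y₁) = 0 := by
      simp only [br, map_add] at *
      rw [h0.2, h1.2, add_zero]
    rwa [hyeq] at this

open LieSuperAlgebra in
private lemma br_center_right {F : Type u} {L : Type v} [Field F] [AddCommGroup L]
    [Module F L] [LieSuperAlgebra F L] {z : L} (hz : z ∈ center F) (x : L) :
    br F x z = 0 := by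
  have hztop : z ∈ grading (F := F) (L := L) 0 ⊔ grading (F := F) (L := L) 1 := by
    rw [grading_sup]; trivial
  obtain ⟨z₀, hz₀, z₁, hz₁, hzeq⟩ := Submodule.mem_sup.mp hztop
  have hxtop : x ∈ grading (F := F) (L := L) 0 ⊔ grading (F := F) (L := L) 1 := by
    rw [grading_sup]; trivial
  obtain ⟨x₀, hx₀, x₁, hx₁, hxeq⟩ := Submodule.mem_sup.mp hxtop
  have key : ∀ j : ZMod 2, ∀ w ∈ grading (F := F) (L := L) j, br F w z = 0 := by
    intro j w hw
    have e0 : br F w z₀ = 0 := by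
      have hc := (center_comp_br hz hz₀ hz₁ hzeq w).1
      simp only [br] at hc ⊢
      rw [super_skew j 0 w hw z₀ hz₀, hc, smul_zero, neg_zero]
    have e1 : br F w z₁ = 0 := by
      have hc := (center_comp_br hz hz₀ hz₁ hzeq w).2
      simp only [br] at hc ⊢
      rw [super_skew j 1 w hw z₁ hz₁, hc, smul_zero, neg_zero]
    have : br F w (z₀ + z₁) = 0 := by
      simp only [br, map_add] at *
      rw [e0, e1, add_zero]
    rwa [hzeq] at this
  have : br F (x₀ + x₁) z = 0 := by
    have e0 := key 0 x₀ hx₀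
    have e1 := key 1 x₁ hx₁
    simp only [br, map_add, LinearMap.add_apply] at *
    rw [e0, e1, add_zero]
  rwa [hxeq] at this

open LieSuperAlgebra Polynomial in
/-- If `π : L̂ → L` is a central extension, `L` has a finite weight decomposition relative
to an abelian subalgebra `h`, `h₀ ∈ h` and `π h' = h₀`, and `m(t)` is the minimal
polynomial of `ad h₀` on `L`, then the minimal polynomial of `ad h'` on `L̂`
divides `t·m(t)`. -/
theorem minpoly_lift_dvd {F : Type u} {Lh L : Type v} [Field F]
    [AddCommGroup Lh] [Module F Lh] [LieSuperAlgebra F Lh]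
    [AddCommGroup L] [Module F L] [LieSuperAlgebra F L]
    (π : Lh →ₗ[F] L) (hπ : IsCentralExtension F π)
    (h : Submodule F L) (hh0 : h ≤ grading (F := F) (L := L) 0)
    (habelian : ∀ x y : h, br F (x : L) (y : L) = 0)
    (Δ : Set (Module.Dual F h)) (hfin : Δ.Finite) (h0 : (0 : Module.Dual F h) ∉ Δ)
    (hsum : weightSpace F h 0 ⊔ (⨆ α ∈ Δ, weightSpace F h α) = ⊤)
    (hzero : weightSpace F h 0 = Submodule.span F
        {z : L | ∃ α ∈ Δ, ∃ x ∈ weightSpace F h α, ∃ y ∈ weightSpace F h (-α), z = br F x y})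
    (h₀ : h) (h' : Lh) (hlift : π h' = (h₀ : L))
    (hint : IsIntegral F (bracket (F := F) ((h₀ : L)) : Module.End F L)) :
    minpoly F (bracket (F := F) h' : Module.End F Lh) ∣
      X * (minpoly F (bracket (F := F) ((h₀ : L)) : Module.End F L)) := by
  set D : Module.End F Lh := bracket (F := F) h' with hD
  set d : Module.End F L := bracket (F := F) ((h₀ : L)) with hd
  set m : Polynomial F := minpoly F d with hm
  have hcomm : ∀ x : Lh, π (D x) = d (π x) := by
    intro x
    have := hπ.1.1 h' x
    simp only [br] at this
    rw [hD, hd, this, hlift]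
  have hcommp : ∀ (p : Polynomial F) (x : Lh),
      π ((Polynomial.aeval D p) x) = (Polynomial.aeval d p) (π x) := by
    intro p
    induction p using Polynomial.induction_on' with
    | add p q hp hq =>
      intro x
      simp only [map_add, LinearMap.add_apply, hp x, hq x]
    | monomial n a =>
      intro x
      simp only [Polynomial.aeval_monomial, Module.End.mul_apply, Module.algebraMap_end_apply,
        LinearMap.smul_apply, map_smul]
      congr 1
      induction n with
      | zero => simp
      | succ k ih =>
        simp only [pow_succ', Module.End.mul_apply, hcomm, ih]
  apply minpoly.dvd
  rw [map_mul, Polynomial.aeval_X]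
  ext x
  have hker : π ((Polynomial.aeval D m) x) = 0 := by
    rw [hcommp m x, hm, minpoly.aeval, LinearMap.zero_apply]
  have hcen : (Polynomial.aeval D m) x ∈ center F := hπ.2.2 _ hker
  have hz : D ((Polynomial.aeval D m) x) = 0 := by
    have := br_center_right hcen h'
    simpa [br, hD] using this
  simpa [Module.End.mul_apply] using hz
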